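/- If q is a quadratic form on ℝⁿ (n ≥ 1) satisfying q(v) ≥ 1 for every v ∈ ℤⁿ \ {0}, then q is positive definite. -/

import Mathlib

open Matrix Finset

lemma dirichlet_approx {n : ℕ} (x : Fin n → ℝ) (N : ℕ) (hN : 0 < N) :
    ∃ (m : ℕ) (v : Fin n → ℤ), 1 ≤ m ∧ ∀ i, |(m : ℝ) * x i - (v i : ℝ)| < 1 / N := by
  have key : ∀ a b : ℕ, a < b →
      ((fun i => ⌊(N : ℝ) * Int.fract ((a : ℝ) * x i)⌋) =
        (fun i => ⌊(N : ℝ) * Int.fract ((b : ℝ) * x i)⌋)) →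
      ∃ (m : ℕ) (v : Fin n → ℤ), 1 ≤ m ∧ ∀ i, |(m : ℝ) * x i - (v i : ℝ)| < 1 / N := by
    intro a b hlt heq
    refine ⟨b - a, fun i => ⌊(b : ℝ) * x i⌋ - ⌊(a : ℝ) * x i⌋, by omega, ?_⟩
    intro i
    have hfl : ⌊(N : ℝ) * Int.fract ((a : ℝ) * x i)⌋ = ⌊(N : ℝ) * Int.fract ((b : ℝ) * x i)⌋ :=
      congrFun heq i
    have h1 : |(N : ℝ) * Int.fract ((a : ℝ) * x i) - (N : ℝ) * Int.fract ((b : ℝ) * x i)| < 1 :=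
      Int.abs_sub_lt_one_of_floor_eq_floor hfl
    have hNpos : (0 : ℝ) < N := by exact_mod_cast hN
    have h2 : |Int.fract ((b : ℝ) * x i) - Int.fract ((a : ℝ) * x i)| < 1 / N := by
      rw [lt_div_iff₀ hNpos]
      calc |Int.fract ((b : ℝ) * x i) - Int.fract ((a : ℝ) * x i)| * N
          = |(N : ℝ) * Int.fract ((a : ℝ) * x i) - (N : ℝ) * Int.fract ((b : ℝ) * x i)| := by
            rw [← abs_neg, ← mul_sub, abs_mul, abs_of_pos hNpos]; ring_nf
        _ < 1 := h1
    have hfb : (b : ℝ) * x i - ⌊(b : ℝ) * x i⌋ = Int.fract ((b : ℝ) * x i) := Int.self_sub_floor _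
    have hfa : (a : ℝ) * x i - ⌊(a : ℝ) * x i⌋ = Int.fract ((a : ℝ) * x i) := Int.self_sub_floor _
    have hcast : ((b - a : ℕ) : ℝ) = (b : ℝ) - (a : ℝ) := by
      push_cast [Nat.cast_sub hlt.le]; ring
    calc |((b - a : ℕ) : ℝ) * x i - ((⌊(b : ℝ) * x i⌋ - ⌊(a : ℝ) * x i⌋ : ℤ) : ℝ)|
        = |Int.fract ((b : ℝ) * x i) - Int.fract ((a : ℝ) * x i)| := by
          rw [hcast]; push_cast; rw [← hfb, ← hfa]; ring_nf
      _ < 1 / N := h2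
  have maps : ∀ k ∈ Finset.range (N ^ n + 1),
      (fun i => ⌊(N : ℝ) * Int.fract ((k : ℝ) * x i)⌋) ∈
        Fintype.piFinset (fun _ : Fin n => Finset.Ico (0 : ℤ) N) := by
    intro k _
    rw [Fintype.mem_piFinset]
    intro i
    rw [Finset.mem_Ico]
    refine ⟨Int.floor_nonneg.mpr (mul_nonneg (Nat.cast_nonneg N) (Int.fract_nonneg _)), ?_⟩
    refine Int.floor_lt.mpr ?_
    push_cast
    calc (N : ℝ) * Int.fract ((k : ℝ) * x i) < (N : ℝ) * 1 :=
          mul_lt_mul_of_pos_left (Int.fract_lt_one _) (by exact_mod_cast hN)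
      _ = N := mul_one _
  have hcard : (Fintype.piFinset (fun _ : Fin n => Finset.Ico (0 : ℤ) N)).card
      < (Finset.range (N ^ n + 1)).card := by
    rw [Fintype.card_piFinset]
    simp
  obtain ⟨a, _, b, _, hab, heq⟩ :=
    Finset.exists_ne_map_eq_of_card_lt_of_maps_to hcard maps
  rcases hab.lt_or_gt with hlt | hlt
  · exact key a b hlt heq
  · exact key b a hlt heq.symm

lemma dot_bound {n : ℕ} (A : Matrix (Fin n) (Fin n) ℝ) (y e : Fin n → ℝ) {C D : ℝ}
    (hC : 0 ≤ C) (hD : 0 ≤ D) (hy : ∀ i, |y i| ≤ C) (he : ∀ i, |e i| ≤ D) :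
    |y ⬝ᵥ A.mulVec e| ≤ (∑ i, ∑ j, |A i j|) * C * D := by
  have hrow : ∀ i, |(A.mulVec e) i| ≤ (∑ j, |A i j|) * D := by
    intro i
    calc |(A.mulVec e) i| = |∑ j, A i j * e j| := by rfl
      _ ≤ ∑ j, |A i j * e j| := Finset.abs_sum_le_sum_abs _ _
      _ ≤ ∑ j, |A i j| * D := by
          refine Finset.sum_le_sum fun j _ => ?_
          rw [abs_mul]
          exact mul_le_mul_of_nonneg_left (he j) (abs_nonneg _)
      _ = (∑ j, |A i j|) * D := by rw [Finset.sum_mul]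
  calc |y ⬝ᵥ A.mulVec e| = |∑ i, y i * (A.mulVec e) i| := by rfl
    _ ≤ ∑ i, |y i * (A.mulVec e) i| := Finset.abs_sum_le_sum_abs _ _
    _ ≤ ∑ i, C * ((∑ j, |A i j|) * D) := by
        refine Finset.sum_le_sum fun i _ => ?_
        rw [abs_mul]
        exact mul_le_mul (hy i) (hrow i) (abs_nonneg _) hC
    _ = (∑ i, ∑ j, |A i j|) * C * D := by
        rw [Finset.sum_mul, Finset.sum_mul]
        exact Finset.sum_congr rfl fun i _ => by ring

lemma quad_expand {n : ℕ} (A : Matrix (Fin n) (Fin n) ℝ) (x e : Fin n → ℝ) (c : ℝ) :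
    (c • x + e) ⬝ᵥ A.mulVec (c • x + e)
      = c * c * (x ⬝ᵥ A.mulVec x) + c * (x ⬝ᵥ A.mulVec e) + c * (e ⬝ᵥ A.mulVec x)
        + e ⬝ᵥ A.mulVec e := by
  simp only [Matrix.mulVec_add, Matrix.mulVec_smul, dotProduct_add, add_dotProduct,
    dotProduct_smul, smul_dotProduct, smul_eq_mul]
  ring

/-- A quadratic form on `ℝⁿ` (`n ≥ 1`), given by a symmetric matrix `A`, taking values `≥ 1`
at every nonzero integral vector is positive definite. -/
theorem posDef_of_one_le_on_int_vectors {n : ℕ} (hn : 1 ≤ n)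
    (A : Matrix (Fin n) (Fin n) ℝ) (hA : A.IsSymm)
    (h : ∀ v : Fin n → ℤ, v ≠ 0 →
      1 ≤ (fun i => (v i : ℝ)) ⬝ᵥ A.mulVec (fun i => (v i : ℝ))) :
    A.PosDef := by
  have herm : A.IsHermitian := by
    show Aᴴ = A
    ext i j
    rw [Matrix.conjTranspose_apply, star_trivial]
    exact congrFun (congrFun hA j) i ▸ rfl
  set M := ∑ i, ∑ j, |A i j| with hMdef
  have hM0 : 0 ≤ M := Finset.sum_nonneg fun i _ => Finset.sum_nonneg fun j _ => abs_nonneg _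
  -- Common setup: given `x ≠ 0` and a positive natural `N` with `1/N < |x i₀|`,
  -- produce a nonzero integer vector `v = m • x + e`, `|e i| < 1/N`.
  have setup : ∀ (x : Fin n → ℝ), x ≠ 0 → ∀ N : ℕ, 0 < N → (∃ i₀, (1 : ℝ) / N < |x i₀|) →
      ∃ (m : ℕ) (v : Fin n → ℤ) (e : Fin n → ℝ),
        1 ≤ m ∧ v ≠ 0 ∧ (fun i => ((v i : ℝ))) = (m : ℝ) • x + e ∧ ∀ i, |e i| ≤ 1 / N := by
    intro x hx N hN ⟨i₀, hi₀⟩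
    obtain ⟨m, v, hm, hv⟩ := dirichlet_approx x N hN
    have hm1 : (1 : ℝ) ≤ (m : ℝ) := by exact_mod_cast hm
    refine ⟨m, v, fun i => (v i : ℝ) - m * x i, hm, ?_, ?_, ?_⟩
    · intro h0
      have := hv i₀
      rw [h0] at this
      simp only [Pi.zero_apply, Int.cast_zero, sub_zero, abs_mul, Nat.abs_cast] at this
      nlinarith [abs_nonneg (x i₀)]
    · funext i; simp
    · intro i; have := hv i; rw [abs_sub_comm] at this; exact this.le
  -- Step 1: A is positive semidefinite.
  have nonneg : ∀ x : Fin n → ℝ, 0 ≤ x ⬝ᵥ A.mulVec x := by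
    intro x
    by_contra hneg
    push_neg at hneg
    have hx : x ≠ 0 := by
      intro h0; rw [h0] at hneg; simp at hneg
    obtain ⟨i₀, hi₀⟩ : ∃ i, x i ≠ 0 := Function.ne_iff.mp hx
    set B := 1 + ∑ i, |x i| with hBdef
    have hB1 : (1 : ℝ) ≤ B := by
      have : 0 ≤ ∑ i, |x i| := Finset.sum_nonneg fun i _ => abs_nonneg _
      simp [hBdef]; linarith
    have hxB : ∀ i, |x i| ≤ B := by
      intro i
      have : |x i| ≤ ∑ j, |x j| :=
        Finset.single_le_sum (fun j _ => abs_nonneg (x j)) (Finset.mem_univ i)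
      simp [hBdef]; linarith
    set δ := -(x ⬝ᵥ A.mulVec x) with hδdef
    have hδ : 0 < δ := by simp [hδdef]; linarith
    obtain ⟨N, hNgt⟩ := exists_nat_gt (max (max (2 * M * B / δ) (1 / |x i₀|)) M)
    have hxi₀ : 0 < |x i₀| := abs_pos.mpr hi₀
    have hNR : (0 : ℝ) < N :=
      lt_trans (lt_of_lt_of_le (by positivity) (le_trans (le_max_right _ _) (le_max_left _ _))) hNgt
    have hNpos : 0 < N := by exact_mod_cast hNR
    have hNi₀ : (1 : ℝ) / N < |x i₀| := by
      rw [div_lt_iff₀ hNR]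
      have : 1 / |x i₀| < N := lt_of_le_of_lt (le_trans (le_max_right _ _) (le_max_left _ _)) hNgt
      rw [div_lt_iff₀ hxi₀] at this
      linarith
    obtain ⟨m, v, e, hm, hvne, hveq, he⟩ := setup x hx N hNpos ⟨i₀, hNi₀⟩
    have hm1 : (1 : ℝ) ≤ (m : ℝ) := by exact_mod_cast hm
    have h1le := h v hvne
    rw [hveq, quad_expand] at h1le
    set t := (1 : ℝ) / N with htdef
    have ht : 0 < t := by positivity
    have htN : t * N = 1 := by rw [htdef]; exact div_mul_cancel₀ 1 hNR.ne'
    have hX1 : |x ⬝ᵥ A.mulVec e| ≤ M * B * t :=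
      dot_bound A x e (by linarith) ht.le hxB he
    have hX2 : |e ⬝ᵥ A.mulVec x| ≤ M * t * B :=
      dot_bound A e x ht.le (by linarith) he hxB
    have hE : |e ⬝ᵥ A.mulVec e| ≤ M * t * t :=
      dot_bound A e e ht.le ht.le he he
    have h2MB : 2 * M * B * t < δ := by
      have h1 : 2 * M * B / δ < N := lt_of_le_of_lt (le_trans (le_max_left _ _) (le_max_left _ _)) hNgt
      rw [div_lt_iff₀ hδ] at h1
      calc 2 * M * B * t < N * δ * t := by nlinarith
        _ = δ * (t * N) := by ring
        _ = δ := by rw [htN]; ring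
    have hMt : M * t < 1 := by
      have h1 : M < N := lt_of_le_of_lt (le_max_right _ _) hNgt
      calc M * t < N * t := by nlinarith
        _ = 1 := by rw [mul_comm]; exact htN
    have ht1 : t ≤ 1 := by
      rw [htdef, div_le_one hNR]
      exact_mod_cast hNpos
    rw [abs_le] at hX1 hX2 hE
    have hqx : x ⬝ᵥ A.mulVec x = -δ := by rw [hδdef]; ring
    rw [hqx] at h1le
    set c := (m : ℝ)
    have hc0 : (0 : ℝ) < c := lt_of_lt_of_le zero_lt_one hm1
    have hcδ : c * δ ≤ c * c * δ := by
      have hpr : 0 ≤ (c - 1) * c * δ :=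
        mul_nonneg (mul_nonneg (by linarith) hc0.le) hδ.le
      nlinarith [hpr]
    have hcomm : M * t * B = M * B * t := by ring
    have hX2' : e ⬝ᵥ A.mulVec x ≤ M * B * t := hcomm ▸ hX2.2
    have hcr1 : c * (x ⬝ᵥ A.mulVec e) ≤ c * (M * B * t) :=
      mul_le_mul_of_nonneg_left hX1.2 hc0.le
    have hcr2 : c * (e ⬝ᵥ A.mulVec x) ≤ c * (M * B * t) :=
      mul_le_mul_of_nonneg_left hX2' hc0.le
    have hcross : c * (x ⬝ᵥ A.mulVec e) + c * (e ⬝ᵥ A.mulVec x) ≤ c * (2 * M * B * t) := by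
      calc c * (x ⬝ᵥ A.mulVec e) + c * (e ⬝ᵥ A.mulVec x)
          ≤ c * (M * B * t) + c * (M * B * t) := add_le_add hcr1 hcr2
        _ = c * (2 * M * B * t) := by ring
    have h5 : c * (2 * M * B * t) < c * δ := mul_lt_mul_of_pos_left h2MB hc0
    have hElt : e ⬝ᵥ A.mulVec e < 1 := by
      have h6 : M * t * t ≤ M * t := by
        calc M * t * t ≤ M * t * 1 := mul_le_mul_of_nonneg_left ht1 (mul_nonneg hM0 ht.le)
          _ = M * t := mul_one _
      linarith [hE.2, h6, hMt]
    linarith [h1le, hcross, h5, hcδ, hElt]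
  have psd : A.PosSemidef := posSemidef_iff_dotProduct_mulVec.mpr ⟨herm, fun x => by simpa using nonneg x⟩
  -- Step 2: A has trivial kernel.
  have ker : ∀ x : Fin n → ℝ, x ≠ 0 → A.mulVec x ≠ 0 := by
    intro x hx hker
    obtain ⟨i₀, hi₀⟩ : ∃ i, x i ≠ 0 := Function.ne_iff.mp hx
    have hxi₀ : 0 < |x i₀| := abs_pos.mpr hi₀
    obtain ⟨N, hNgt⟩ := exists_nat_gt (max (1 / |x i₀|) M)
    have hNR : (0 : ℝ) < N := lt_trans (lt_of_lt_of_le (by positivity) (le_max_left _ _)) hNgt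
    have hNpos : 0 < N := by exact_mod_cast hNR
    have hNi₀ : (1 : ℝ) / N < |x i₀| := by
      rw [div_lt_iff₀ hNR]
      have : 1 / |x i₀| < N := lt_of_le_of_lt (le_max_left _ _) hNgt
      rw [div_lt_iff₀ hxi₀] at this
      linarith
    obtain ⟨m, v, e, hm, hvne, hveq, he⟩ := setup x hx N hNpos ⟨i₀, hNi₀⟩
    have h1le := h v hvne
    rw [hveq, quad_expand] at h1le
    have hvm : x ᵥ* A = A.mulVec x := by
      rw [← Matrix.mulVec_transpose, hA.eq]
    have hX1 : x ⬝ᵥ A.mulVec e = 0 := by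
      rw [Matrix.dotProduct_mulVec, hvm, hker, zero_dotProduct]
    have hX2 : e ⬝ᵥ A.mulVec x = 0 := by rw [hker, dotProduct_zero]
    have hqx : x ⬝ᵥ A.mulVec x = 0 := by rw [hker, dotProduct_zero]
    rw [hX1, hX2, hqx] at h1le
    simp only [mul_zero, add_zero, zero_add] at h1le
    set t := (1 : ℝ) / N with htdef
    have ht : 0 < t := by positivity
    have htN : t * N = 1 := by rw [htdef]; exact div_mul_cancel₀ 1 hNR.ne'
    have hE : |e ⬝ᵥ A.mulVec e| ≤ M * t * t := dot_bound A e e ht.le ht.le he he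
    have hMt : M * t < 1 := by
      have h1 : M < N := lt_of_le_of_lt (le_max_right _ _) hNgt
      calc M * t < N * t := by nlinarith
        _ = 1 := by rw [mul_comm]; exact htN
    have ht1 : t ≤ 1 := by
      rw [htdef, div_le_one hNR]
      exact_mod_cast hNpos
    rw [abs_le] at hE
    have h6 : M * t * t ≤ M * t := by
      calc M * t * t ≤ M * t * 1 := mul_le_mul_of_nonneg_left ht1 (mul_nonneg hM0 ht.le)
        _ = M * t := mul_one _
    linarith [hE.2, h6, hMt, h1le]
  refine posDef_iff_dotProduct_mulVec.mpr ⟨herm, fun x hx => ?_⟩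
  have hsx : star x = x := by simp
  rw [hsx]
  rcases (nonneg x).lt_or_eq with hlt | heq
  · exact hlt
  · exfalso
    apply ker x hx
    rw [← psd.dotProduct_mulVec_zero_iff x, hsx]
    exact heq.symm
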